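/- For every nonnegative integer n, Σ_{k=0}^n k H_{2n−k} = n(2n+1) H_{2n+1} − (n(3n+1)/2) H_n − (5/4) n(n+1). -/

import Mathlib

/-- Generalized harmonic number `H n m = ∑_{k=1}^n 1/k^m` (order `m : ℤ`), as a rational. -/
def H (n : ℕ) (m : ℤ) : ℚ := ∑ k ∈ Finset.range n, ((k : ℚ) + 1) ^ (-m)

lemma H_succ (m : ℕ) : H (m+1) 1 = H m 1 + 1/((m:ℚ)+1) := by
  simp [H, Finset.sum_range_succ, zpow_neg]

lemma Hsum (a b : ℕ) : ∑ j ∈ Finset.range b, (1:ℚ)/((a:ℚ)+1+j) = H (a+b) 1 - H a 1 := by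
  induction b with
  | zero => simp
  | succ b ih =>
    rw [Finset.sum_range_succ, ih, show a + (b+1) = (a+b)+1 from rfl, H_succ]
    push_cast
    ring

lemma key1 (n : ℕ) : ∑ k ∈ Finset.range (n+1), (k:ℚ)/(2*(n:ℚ)-k+1)
    = (2*(n:ℚ)+1)*(H (2*n+1) 1 - H n 1) - ((n:ℚ)+1) := by
  rw [← Finset.sum_range_reflect]
  have h1 : ∀ j ∈ Finset.range (n+1),
      ((n+1-1-j : ℕ):ℚ)/(2*(n:ℚ)-(n+1-1-j : ℕ)+1)
        = (2*(n:ℚ)+1) * (1/((n:ℚ)+1+j)) - 1 := by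
    intro j hj
    rw [Finset.mem_range] at hj
    have hjn : j ≤ n := by omega
    have : ((n+1-1-j : ℕ):ℚ) = (n:ℚ) - j := by
      push_cast [Nat.add_sub_cancel, Nat.cast_sub hjn]; ring
    rw [this]
    have hd : 2*(n:ℚ) - ((n:ℚ) - j) + 1 = (n:ℚ)+1+j := by ring
    rw [hd]
    have hne : (n:ℚ)+1+j ≠ 0 := by positivity
    field_simp
    ring
  have h2 := Hsum n (n+1)
  rw [show n+(n+1)=2*n+1 by ring] at h2
  rw [Finset.sum_congr rfl h1, Finset.sum_sub_distrib, ← Finset.mul_sum, h2,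
    Finset.sum_const, Finset.card_range, nsmul_eq_mul]
  push_cast
  ring

lemma key2 (n : ℕ) : ∑ k ∈ Finset.range (n+1), (k:ℚ)/(2*(n:ℚ)-k+2)
    = (2*(n:ℚ)+2)*(H (2*n+2) 1 - H (n+1) 1) - ((n:ℚ)+1) := by
  rw [← Finset.sum_range_reflect]
  have h1 : ∀ j ∈ Finset.range (n+1),
      ((n+1-1-j : ℕ):ℚ)/(2*(n:ℚ)-(n+1-1-j : ℕ)+2)
        = (2*(n:ℚ)+2) * (1/((n:ℚ)+2+j)) - 1 := by
    intro j hj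
    rw [Finset.mem_range] at hj
    have hjn : j ≤ n := by omega
    have : ((n+1-1-j : ℕ):ℚ) = (n:ℚ) - j := by
      push_cast [Nat.add_sub_cancel, Nat.cast_sub hjn]; ring
    rw [this]
    have hd : 2*(n:ℚ) - ((n:ℚ) - j) + 2 = (n:ℚ)+2+j := by ring
    rw [hd]
    have hne : (n:ℚ)+2+j ≠ 0 := by positivity
    field_simp
    ring
  have h2 := Hsum (n+1) (n+1)
  rw [show (n+1)+(n+1)=2*n+2 by ring] at h2
  have h3 : ∀ j ∈ Finset.range (n+1), (1:ℚ)/((n:ℚ)+2+j) = 1/(((n+1:ℕ):ℚ)+1+j) := by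
    intro j _; push_cast; ring_nf
  rw [Finset.sum_congr rfl h1, Finset.sum_sub_distrib, ← Finset.mul_sum,
    Finset.sum_congr rfl h3, h2, Finset.sum_const, Finset.card_range, nsmul_eq_mul]
  push_cast
  ring

theorem sum_k_harmonic_2n_sub (n : ℕ) :
    ∑ k ∈ Finset.range (n + 1), (k : ℚ) * H (2 * n - k) 1
      = (n : ℚ) * (2 * (n : ℚ) + 1) * H (2 * n + 1) 1
        - ((n : ℚ) * (3 * (n : ℚ) + 1) / 2) * H n 1
        - (5 / 4) * (n : ℚ) * ((n : ℚ) + 1) := by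
  induction n with
  | zero => simp [H]
  | succ n ih =>
    rw [Finset.sum_range_succ]
    have e1 : 2*(n+1) - (n+1) = n+1 := by omega
    rw [e1]
    have h1 : ∀ k ∈ Finset.range (n+1), (k:ℚ) * H (2*(n+1)-k) 1
        = (k:ℚ) * H (2*n-k) 1 + (k:ℚ)/(2*(n:ℚ)-k+1) + (k:ℚ)/(2*(n:ℚ)-k+2) := by
      intro k hk
      rw [Finset.mem_range] at hk
      have e : 2*(n+1) - k = (2*n-k) + 1 + 1 := by omega
      rw [e, H_succ, H_succ]
      push_cast [Nat.cast_sub (show k ≤ 2*n by omega)]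
      ring
    rw [Finset.sum_congr rfl h1, Finset.sum_add_distrib, Finset.sum_add_distrib, ih, key1, key2]
    rw [show 2*(n+1)+1 = (2*n+2)+1 by ring, H_succ (2*n+2),
      show 2*n+2 = (2*n+1)+1 from rfl, H_succ (2*n+1), H_succ n]
    push_cast
    have h2 : (2*(n:ℚ)+2) ≠ 0 := by positivity
    have h3 : (2*(n:ℚ)+3) ≠ 0 := by positivity
    have h4 : ((n:ℚ)+1) ≠ 0 := by positivity
    field_simp
    ring
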